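/- If t, n are positive integers with t ≤ n, and C is a homogeneous ΣΠΣΠ circuit computing Perm_n such that every bottom multiplication gate has fan-in (hence degree) at least t, then every level-3 multiplication gate of C has fan-in at most n/t, and consequently the size of C is at least (n!)^{t/n} − 1 = 2^{Ω(t log n)}. -/

import Mathlib

open MvPolynomial

/-- The permanent polynomial `Perm_n = Σ_{σ ∈ S_n} Π_i x_{i, σ i}` in `n²` variables. -/
noncomputable def permPoly (n : ℕ) : MvPolynomial (Fin n × Fin n) ℚ :=
  ∑ σ : Equiv.Perm (Fin n), ∏ i : Fin n, X (i, σ i)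

/-- A homogeneous ΣΠΣΠ circuit over the `n²` permanent variables in which every bottom
multiplication gate has fan-in (hence degree) at least `t`.  Level-1 gates are nonzero
monomials of degree at least `t`; level-2 gates are homogeneous sums of level-1 gates, of
degree at least `t`; level-3 gates are products of level-2 gates (each recorded with its
list of inputs, whose length is its fan-in), nonzero and homogeneous of degree at most `n`
since the homogeneous circuit computes the degree-`n` permanent; level-4 gates are sums of
level-3 gates. -/
structure HomSPSPCircuit (n t : ℕ) where
  L1 : List (MvPolynomial (Fin n × Fin n) ℚ)
  L2 : List (MvPolynomial (Fin n × Fin n) ℚ)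
  L3 : List (List (MvPolynomial (Fin n × Fin n) ℚ))
  L4 : List (MvPolynomial (Fin n × Fin n) ℚ)
  hL1 : ∀ f ∈ L1, ∃ (m : (Fin n × Fin n) →₀ ℕ) (c : ℚ),
    f = monomial m c ∧ c ≠ 0 ∧ t ≤ m.sum fun _ e => e
  hL2 : ∀ f ∈ L2, (∃ g : List (MvPolynomial (Fin n × Fin n) ℚ),
    (∀ p ∈ g, p ∈ L1) ∧ f = g.sum) ∧ ∃ m : ℕ, t ≤ m ∧ f ≠ 0 ∧ f.IsHomogeneous m
  hL3 : ∀ g ∈ L3, (∀ p ∈ g, p ∈ L2) ∧ g.prod ≠ 0 ∧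
    ∃ m : ℕ, m ≤ n ∧ (g.prod).IsHomogeneous m
  hL4 : ∀ f ∈ L4, ∃ g : List (List (MvPolynomial (Fin n × Fin n) ℚ)),
    (∀ p ∈ g, p ∈ L3) ∧ f = (g.map List.prod).sum

/-- The size (number of gates) of a homogeneous ΣΠΣΠ circuit. -/
def HomSPSPCircuit.size {n t : ℕ} (C : HomSPSPCircuit n t) : ℕ :=
  C.L1.length + C.L2.length + C.L3.length + C.L4.length

/-- Product of variables is a monomial. -/
lemma prod_X_eq_monomial {n : ℕ} (σ : Equiv.Perm (Fin n)) :
    (∏ i : Fin n, (X (i, σ i) : MvPolynomial (Fin n × Fin n) ℚ))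
      = monomial (∑ i : Fin n, Finsupp.single (i, σ i) 1) 1 := by
  classical
  induction (Finset.univ : Finset (Fin n)) using Finset.induction with
  | empty => simp [monomial_zero']
  | insert _ _ hx ih =>
    rw [Finset.prod_insert hx, Finset.sum_insert hx, ih, ← pow_one (X _),
      X_pow_eq_monomial, monomial_mul, one_mul]

lemma perm_monomial_injective (n : ℕ) :
    Function.Injective (fun σ : Equiv.Perm (Fin n) =>
      ∑ i : Fin n, Finsupp.single ((i, σ i) : Fin n × Fin n) (1 : ℕ)) := by
  classical
  intro σ τ h
  ext i
  have h' := congrArg (fun f => f (i, σ i)) h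
  simp only [Finsupp.finset_sum_apply, Finsupp.single_apply] at h'
  have hσ : ∑ i' : Fin n, (if ((i', σ i') : Fin n × Fin n) = (i, σ i) then (1:ℕ) else 0) = 1 := by
    rw [Finset.sum_congr rfl (fun i' _ => ?_), Finset.sum_ite_eq' Finset.univ i (fun _ => (1:ℕ))]
    · simp
    · congr 1
      simp only [eq_iff_iff, Prod.mk.injEq]
      constructor
      · rintro ⟨h1, _⟩; exact h1
      · rintro rfl; exact ⟨rfl, rfl⟩
  rw [hσ] at h'
  have hne : (∑ i' : Fin n, (if ((i', τ i') : Fin n × Fin n) = (i, σ i) then (1:ℕ) else 0)) ≠ 0 := by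
    omega
  obtain ⟨i', _, hi'⟩ := Finset.exists_ne_zero_of_sum_ne_zero hne
  have : ((i', τ i') : Fin n × Fin n) = (i, σ i) := by
    by_contra hc
    simp [hc] at hi'
  obtain ⟨h1, h2⟩ := Prod.mk.injEq .. ▸ this
  subst h1
  exact congrArg Fin.val h2.symm

lemma monomial_mem_perm_support {n : ℕ} (σ : Equiv.Perm (Fin n)) :
    (∑ i : Fin n, Finsupp.single ((i, σ i) : Fin n × Fin n) (1:ℕ)) ∈ (permPoly n).support := by
  classical
  rw [MvPolynomial.mem_support_iff, permPoly, coeff_sum]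
  have hc : ∀ τ : Equiv.Perm (Fin n),
      coeff (∑ i : Fin n, Finsupp.single ((i, σ i) : Fin n × Fin n) (1:ℕ))
        (∏ i : Fin n, (X (i, τ i) : MvPolynomial (Fin n × Fin n) ℚ))
      = if τ = σ then 1 else 0 := by
    intro τ
    rw [prod_X_eq_monomial, coeff_monomial]
    congr 1
    simp only [eq_iff_iff]
    constructor
    · exact fun h => perm_monomial_injective n h
    · rintro rfl; rfl
  rw [Finset.sum_congr rfl fun τ _ => hc τ, Finset.sum_ite_eq' Finset.univ σ (fun _ => (1:ℚ))]
  simp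

theorem hom_spsp_bottom_fanin_lower_bound (n t : ℕ) (ht : 0 < t) (htn : t ≤ n)
    (C : HomSPSPCircuit n t) (hperm : permPoly n ∈ C.L4) :
    (∀ g ∈ C.L3, g.length ≤ n / t) ∧
      (n.factorial : ℝ) ^ ((t : ℝ) / n) - 1 ≤ C.size := by
  classical
  -- Part 1: fan-in bound for level-3 gates
  have hfan : ∀ g ∈ C.L3, t * g.length ≤ n := by
    intro g hg
    obtain ⟨hg2, hne, m, hmn, hhom⟩ := C.hL3 g hg
    have key : ∀ l : List (MvPolynomial (Fin n × Fin n) ℚ), (∀ p ∈ l, p ∈ C.L2) →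
        ∃ d, l.prod.IsHomogeneous d ∧ t * l.length ≤ d := by
      intro l
      induction l with
      | nil =>
        exact fun _ => ⟨0, by simpa using MvPolynomial.isHomogeneous_one _ _, by simp⟩
      | cons p l ih =>
        intro hl
        obtain ⟨d, hd, hdl⟩ := ih (fun q hq => hl q (List.mem_cons_of_mem _ hq))
        obtain ⟨_, dp, htdp, _, hp⟩ := C.hL2 p (hl p (List.mem_cons_self))
        refine ⟨dp + d, by rw [List.prod_cons]; exact hp.mul hd, ?_⟩
        simp only [List.length_cons, Nat.mul_succ]
        omega
    obtain ⟨d, hd, hdl⟩ := key g hg2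
    have hdm : d = m := hd.inj_right hhom hne
    omega
  have part1 : ∀ g ∈ C.L3, g.length ≤ n / t := by
    intro g hg
    rw [Nat.le_div_iff_mul_le ht, Nat.mul_comm]
    exact hfan g hg
  refine ⟨part1, ?_⟩
  -- Part 2: size lower bound
  set K := n / t with hKdef
  set M : Finset ((Fin n × Fin n) →₀ ℕ) := C.L1.toFinset.biUnion (fun f => f.support) with hMdef
  have hMcard : M.card ≤ C.L1.length := by
    calc M.card ≤ ∑ f ∈ C.L1.toFinset, f.support.card := Finset.card_biUnion_le
      _ ≤ ∑ _f ∈ C.L1.toFinset, 1 := by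
          refine Finset.sum_le_sum (fun f hf => ?_)
          obtain ⟨m, c, rfl, hc, _⟩ := C.hL1 f (List.mem_toFinset.mp hf)
          rw [support_monomial, if_neg hc]
          simp
      _ = C.L1.toFinset.card := by simp
      _ ≤ C.L1.length := C.L1.toFinset_card_le
  have hL2supp : ∀ p ∈ C.L2, ∀ a ∈ p.support, a ∈ M := by
    have hlist : ∀ l : List (MvPolynomial (Fin n × Fin n) ℚ), (∀ q ∈ l, q ∈ C.L1) →
        ∀ a ∈ l.sum.support, a ∈ M := by
      intro l
      induction l with
      | nil => simp
      | cons q l ih =>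
        intro hl a ha
        rw [List.sum_cons] at ha
        rcases Finset.mem_union.mp (MvPolynomial.support_add ha) with h | h
        · exact Finset.mem_biUnion.mpr ⟨q, List.mem_toFinset.mpr (hl q (List.mem_cons_self)), h⟩
        · exact ih (fun r hr => hl r (List.mem_cons_of_mem _ hr)) a h
    intro p hp a ha
    obtain ⟨⟨gl, hgl, rfl⟩, _⟩ := C.hL2 p hp
    exact hlist gl hgl a ha
  -- monomials of a product of level-2 gates
  have hprod : ∀ (l : List (MvPolynomial (Fin n × Fin n) ℚ)), (∀ p ∈ l, p ∈ C.L2) →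
      ∀ (k : ℕ), l.length ≤ k → ∀ m ∈ l.prod.support,
      ∃ f : Fin k → Option {x // x ∈ M}, m = ∑ j, (f j).elim 0 Subtype.val := by
    intro l
    induction l with
    | nil =>
      intro _ k _ m hm
      rw [List.prod_nil] at hm
      have h1 : (1 : MvPolynomial (Fin n × Fin n) ℚ).support = {0} := by
        rw [← C_1, ← monomial_zero', support_monomial, if_neg (one_ne_zero)]
      rw [h1, Finset.mem_singleton] at hm
      exact ⟨fun _ => none, by simp [hm]⟩
    | cons p l ih =>
      intro hl k hk m hm
      cases k with
      | zero => simp at hk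
      | succ k =>
        rw [List.prod_cons] at hm
        obtain ⟨a, ha, b, hb, hab⟩ := Finset.mem_add.mp (MvPolynomial.support_mul _ _ hm)
        obtain ⟨f', hf'⟩ := ih (fun q hq => hl q (List.mem_cons_of_mem _ hq)) k
          (by simpa using Nat.succ_le_succ_iff.mp (by simpa using hk)) b hb
        refine ⟨Fin.cons (some ⟨a, hL2supp p (hl p (List.mem_cons_self)) a ha⟩) f', ?_⟩
        rw [Fin.sum_univ_succ]
        simp only [Fin.cons_zero, Fin.cons_succ]
        rw [← hab, ← hf']
        rfl
  set T : Finset ((Fin n × Fin n) →₀ ℕ) :=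
    (Finset.univ : Finset (Fin K → Option {x // x ∈ M})).image
      (fun f => ∑ j, (f j).elim 0 Subtype.val) with hTdef
  have hsub : (permPoly n).support ⊆ T := by
    have hsum : ∀ ls : List (List (MvPolynomial (Fin n × Fin n) ℚ)),
        (∀ g ∈ ls, g ∈ C.L3) → ∀ m ∈ (ls.map List.prod).sum.support,
        ∃ g ∈ C.L3, m ∈ g.prod.support := by
      intro ls
      induction ls with
      | nil => simp
      | cons g ls ih =>
        intro hls m hm
        rw [List.map_cons, List.sum_cons] at hm
        rcases Finset.mem_union.mp (MvPolynomial.support_add hm) with h | h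
        · exact ⟨g, hls g (List.mem_cons_self), h⟩
        · exact ih (fun g' hg' => hls g' (List.mem_cons_of_mem _ hg')) m h
    intro m hm
    obtain ⟨gs, hgs, hpe⟩ := C.hL4 _ hperm
    rw [hpe] at hm
    obtain ⟨g, hg, hmg⟩ := hsum gs hgs m hm
    obtain ⟨hg2, _, _⟩ := C.hL3 g hg
    obtain ⟨f, hf⟩ := hprod g hg2 K (part1 g hg) m hmg
    exact Finset.mem_image.mpr ⟨f, Finset.mem_univ f, hf.symm⟩
  have hcard1 : n.factorial ≤ (permPoly n).support.card := by
    have himg : Finset.univ.image (fun σ : Equiv.Perm (Fin n) =>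
        ∑ i : Fin n, Finsupp.single ((i, σ i) : Fin n × Fin n) (1:ℕ))
        ⊆ (permPoly n).support := by
      intro x hx
      obtain ⟨σ, _, rfl⟩ := Finset.mem_image.mp hx
      exact monomial_mem_perm_support σ
    calc n.factorial
        = (Finset.univ.image (fun σ : Equiv.Perm (Fin n) =>
            ∑ i : Fin n, Finsupp.single ((i, σ i) : Fin n × Fin n) (1:ℕ))).card := by
          rw [Finset.card_image_of_injective _ (perm_monomial_injective n), Finset.card_univ,
            Fintype.card_perm, Fintype.card_fin]
      _ ≤ (permPoly n).support.card := Finset.card_le_card himg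
  have hcard2 : T.card ≤ (M.card + 1) ^ K := by
    calc T.card ≤ (Finset.univ : Finset (Fin K → Option {x // x ∈ M})).card :=
        Finset.card_image_le
      _ = (M.card + 1) ^ K := by
        rw [Finset.card_univ, Fintype.card_fun, Fintype.card_option, Fintype.card_coe,
          Fintype.card_fin]
  have hnat : n.factorial ≤ (C.size + 1) ^ K := by
    have h1 : n.factorial ≤ (M.card + 1) ^ K :=
      le_trans hcard1 (le_trans (Finset.card_le_card hsub) hcard2)
    refine le_trans h1 (Nat.pow_le_pow_left ?_ K)
    have : C.L1.length ≤ C.size := by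
      unfold HomSPSPCircuit.size; omega
    omega
  -- real arithmetic
  have hn0 : (0:ℝ) < (n:ℝ) := by exact_mod_cast lt_of_lt_of_le ht htn
  have hx1 : (1:ℝ) ≤ (C.size : ℝ) + 1 := by have := Nat.cast_nonneg (α := ℝ) C.size; linarith
  have hKt : K * t ≤ n := Nat.div_mul_le_self n t
  have hexp : (K:ℝ) * ((t:ℝ)/(n:ℝ)) ≤ 1 := by
    have heq : (K:ℝ) * ((t:ℝ)/(n:ℝ)) = ((K * t : ℕ):ℝ)/(n:ℝ) := by push_cast; ring
    rw [heq, div_le_one hn0]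
    exact_mod_cast hKt
  have key : (n.factorial : ℝ) ^ ((t:ℝ)/(n:ℝ)) ≤ (C.size : ℝ) + 1 := by
    calc (n.factorial : ℝ) ^ ((t:ℝ)/(n:ℝ))
        ≤ ((((C.size + 1) ^ K : ℕ)) : ℝ) ^ ((t:ℝ)/(n:ℝ)) :=
          Real.rpow_le_rpow (Nat.cast_nonneg _) (Nat.cast_le.mpr hnat) (by positivity)
      _ = ((C.size : ℝ) + 1) ^ ((K:ℝ) * ((t:ℝ)/(n:ℝ))) := by
          push_cast
          rw [← Real.rpow_natCast ((C.size : ℝ) + 1) K, ← Real.rpow_mul (by positivity : (0:ℝ) ≤ (C.size:ℝ)+1)]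
      _ ≤ ((C.size : ℝ) + 1) ^ (1:ℝ) := Real.rpow_le_rpow_of_exponent_le hx1 hexp
      _ = (C.size : ℝ) + 1 := Real.rpow_one _
  linarith
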